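/- There exists a constant C > 0 such that the following holds. Let Γ be a player-specific congestion game on a circle with n players in which no player is of type 1 or 1', and suppose there exist termination points for exactly one kind of token (i.e., there is a termination point for overload tokens but none for underload tokens, or vice versa). Then the transition graph TG(Γ) is acyclic and every best response schedule terminates after at most C·n^2 steps. -/

import Mathlib

open scoped ENNReal NNReal

/-- A player-specific singleton congestion game on a circle with `n` players:
the resources are `0, …, n-1`, and player `i` chooses between resource `i`
(its 0-strategy, with delay function `d0 i`) and resource `i+1 (mod n)`
(its 1-strategy, with delay function `d1 i`). The delay functions are strictly
increasing and ties are broken (for each player the delays of its two resources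
at congestions `1 ≤ k ≤ n` are pairwise distinct). -/
structure CircleGame (n : ℕ) where
  d0 : Fin n → ℕ → ℕ
  d1 : Fin n → ℕ → ℕ
  mono0 : ∀ i, StrictMono (d0 i)
  mono1 : ∀ i, StrictMono (d1 i)
  tie : ∀ i : Fin n, ∀ k, 1 ≤ k → k ≤ n → ∀ k', 1 ≤ k' → k' ≤ n → d0 i k ≠ d1 i k'

namespace CircleGame

variable {n : ℕ} [NeZero n]

/-- A state is a function `s : Fin n → Bool`: `s i = false` iff player `i` plays its
0-strategy (resource `i`), and `s i = true` iff it plays its 1-strategy (resource `i+1`).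
`cong s r` is the congestion of resource `r`: resource `r` is allocated by player `r`
(if it plays its 0-strategy) and by player `r-1` (if it plays its 1-strategy). -/
def cong (s : Fin n → Bool) (r : Fin n) : ℕ :=
  (if s r = false then 1 else 0) + (if s (r - 1) = true then 1 else 0)

/-- The current resource of player `i` is a best response to state `s`. -/
def CurrentBR (G : CircleGame n) (s : Fin n → Bool) (i : Fin n) : Prop :=
  if s i = false then G.d0 i (cong s i) ≤ G.d1 i (cong s (i + 1) + 1)
  else G.d1 i (cong s (i + 1)) ≤ G.d0 i (cong s i + 1)

/-- One best-response step: a player whose current resource is not a best response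
switches to its (unique) other resource, which is then its best response. -/
def Step (G : CircleGame n) (s s' : Fin n → Bool) : Prop :=
  ∃ i, ¬ G.CurrentBR s i ∧ s' = Function.update s i (!(s i))

/-- Nash equilibrium: every player's current resource is a best response. -/
def IsNash (G : CircleGame n) (s : Fin n → Bool) : Prop := ∀ i, G.CurrentBR s i

/-- type 1 : `d_{r_i}(1) < d_{r_i}(2) < d_{r_{i+1}}(1) < d_{r_{i+1}}(2)`. -/
def IsType1 (G : CircleGame n) (i : Fin n) : Prop :=
  G.d0 i 1 < G.d0 i 2 ∧ G.d0 i 2 < G.d1 i 1 ∧ G.d1 i 1 < G.d1 i 2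

/-- type 1' : roles of the two resources exchanged. -/
def IsType1' (G : CircleGame n) (i : Fin n) : Prop :=
  G.d1 i 1 < G.d1 i 2 ∧ G.d1 i 2 < G.d0 i 1 ∧ G.d0 i 1 < G.d0 i 2

/-- type 2 : `d_{r_i}(1) < d_{r_{i+1}}(1) < d_{r_i}(2) < d_{r_{i+1}}(2)`. -/
def IsType2 (G : CircleGame n) (i : Fin n) : Prop :=
  G.d0 i 1 < G.d1 i 1 ∧ G.d1 i 1 < G.d0 i 2 ∧ G.d0 i 2 < G.d1 i 2

/-- type 2' : roles of the two resources exchanged. -/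
def IsType2' (G : CircleGame n) (i : Fin n) : Prop :=
  G.d1 i 1 < G.d0 i 1 ∧ G.d0 i 1 < G.d1 i 2 ∧ G.d1 i 2 < G.d0 i 2

/-- type 3 : `d_{r_i}(1) < d_{r_{i+1}}(1) < d_{r_{i+1}}(2) < d_{r_i}(2)`. -/
def IsType3 (G : CircleGame n) (i : Fin n) : Prop :=
  G.d0 i 1 < G.d1 i 1 ∧ G.d1 i 1 < G.d1 i 2 ∧ G.d1 i 2 < G.d0 i 2

/-- type 3' : roles of the two resources exchanged. -/
def IsType3' (G : CircleGame n) (i : Fin n) : Prop :=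
  G.d1 i 1 < G.d0 i 1 ∧ G.d0 i 1 < G.d0 i 2 ∧ G.d0 i 2 < G.d1 i 2

/-- Resource `r_i` is a termination point for overload tokens: the pair of types of
players `i-1` and `i` is one of `(2',2), (3,3'), (3,2), (2',3')`. -/
def OverloadTP (G : CircleGame n) (i : Fin n) : Prop :=
  (G.IsType2' (i - 1) ∧ G.IsType2 i) ∨ (G.IsType3 (i - 1) ∧ G.IsType3' i) ∨
  (G.IsType3 (i - 1) ∧ G.IsType2 i) ∨ (G.IsType2' (i - 1) ∧ G.IsType3' i)

/-- Resource `r_i` is a termination point for underload tokens: the pair of types of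
players `i-1` and `i` is one of `(2,2'), (3,3'), (2,3'), (3,2')`. -/
def UnderloadTP (G : CircleGame n) (i : Fin n) : Prop :=
  (G.IsType2 (i - 1) ∧ G.IsType2' i) ∨ (G.IsType3 (i - 1) ∧ G.IsType3' i) ∨
  (G.IsType2 (i - 1) ∧ G.IsType3' i) ∨ (G.IsType3 (i - 1) ∧ G.IsType2' i)

open scoped Classical in
/-- The set of players whose current resource is not a best response. -/
noncomputable def unsat (G : CircleGame n) (s : Fin n → Bool) : Finset (Fin n) :=
  Finset.univ.filter fun i => ¬ G.CurrentBR s i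

/-- One step of the random best response dynamics: in a state that is not a Nash
equilibrium, a player whose current resource is not a best response is selected
uniformly at random and switches to its best response; Nash equilibria are absorbing. -/
noncomputable def stepPMF (G : CircleGame n) (s : Fin n → Bool) : PMF (Fin n → Bool) :=
  if h : (G.unsat s).Nonempty then
    (PMF.uniformOfFinset (G.unsat s) h).bind fun i => PMF.pure (Function.update s i (!(s i)))
  else PMF.pure s

/-- The distribution of the random best response dynamics after `t` steps, started in `s`. -/
noncomputable def walk (G : CircleGame n) (s : Fin n → Bool) : ℕ → PMF (Fin n → Bool)
  | 0 => PMF.pure s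
  | t + 1 => (walk G s t).bind G.stepPMF

open scoped Classical in
/-- The expected number of steps until the random best response dynamics started in `s`
reaches a Nash equilibrium: since Nash equilibria are absorbing, this is
`∑_{t ≥ 0} Pr[X_t is not a Nash equilibrium]`. -/
noncomputable def expTime (G : CircleGame n) (s : Fin n → Bool) : ℝ≥0∞ :=
  ∑' t : ℕ, ∑ s' ∈ Finset.univ.filter (fun s' => ¬ G.IsNash s'), G.walk s t s'

end CircleGame

namespace CGAux

variable {n : ℕ} [NeZero n]

open Fin.NatCast Fin.CommRing

/-- target of player `i`: AND-player (`τ i = true`) wants `s (i-1) && s (i+1)`,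
copy-player wants `s (i-1)`. -/
def atgt (τ : Fin n → Bool) (s : Fin n → Bool) (i : Fin n) : Bool :=
  if τ i then s (i - 1) && s (i + 1) else s (i - 1)

def AStep (τ : Fin n → Bool) (s s' : Fin n → Bool) : Prop :=
  ∃ i, s i ≠ atgt τ s i ∧ s' = Function.update s i (!(s i))

lemma exists_hit (τ : Fin n → Bool) (hp : ∃ p, τ p = true) (i : Fin n) :
    ∃ k : ℕ, τ (i + (k : Fin n)) = true := by
  obtain ⟨p, hp⟩ := hp
  refine ⟨((p - i : Fin n) : ℕ), ?_⟩
  rw [Fin.cast_val_eq_self]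
  rw [show i + (p - i) = p by ring]
  exact hp

noncomputable def dst (τ : Fin n → Bool) (hp : ∃ p, τ p = true) (i : Fin n) : ℕ :=
  Nat.find (exists_hit τ hp i)

variable (τ : Fin n → Bool) (hp : ∃ p, τ p = true)

lemma dst_le (i : Fin n) : dst τ hp i ≤ n := by
  obtain ⟨p, hpp⟩ := id hp
  have h : τ (i + (((p - i : Fin n) : ℕ) : Fin n)) = true := by
    rw [Fin.cast_val_eq_self, show i + (p - i) = p by ring]; exact hpp
  calc dst τ hp i ≤ ((p - i : Fin n) : ℕ) := Nat.find_min' _ h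
    _ ≤ n := le_of_lt (Fin.is_lt _)

lemma dst_spec (i : Fin n) : τ (i + ((dst τ hp i : ℕ) : Fin n)) = true :=
  Nat.find_spec (exists_hit τ hp i)

lemma dst_zero {i : Fin n} (h : τ i = true) : dst τ hp i = 0 := by
  have : τ (i + ((0 : ℕ) : Fin n)) = true := by simpa using h
  exact Nat.eq_zero_of_le_zero (Nat.find_min' _ this)

lemma dst_succ {i : Fin n} (h : τ i = false) : dst τ hp i = dst τ hp (i + 1) + 1 := by
  have h1 := dst_spec τ hp i
  have h0 : dst τ hp i ≠ 0 := by
    intro hz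
    rw [hz] at h1
    simp only [Nat.cast_zero, add_zero] at h1
    rw [h1] at h; cases h
  obtain ⟨m, hm⟩ : ∃ m, dst τ hp i = m + 1 := ⟨dst τ hp i - 1, by omega⟩
  have h2 : τ ((i + 1) + (m : Fin n)) = true := by
    rw [show (i + 1) + (m : Fin n) = i + (((m + 1 : ℕ) : ℕ) : Fin n) by push_cast; ring,
      ← hm]
    exact h1
  have le1 : dst τ hp (i + 1) ≤ m := Nat.find_min' _ h2
  have h3 : τ (i + (((dst τ hp (i + 1) + 1 : ℕ)) : Fin n)) = true := by
    rw [show i + (((dst τ hp (i + 1) + 1 : ℕ)) : Fin n)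
        = (i + 1) + ((dst τ hp (i + 1) : ℕ) : Fin n) by push_cast; ring]
    exact dst_spec τ hp (i + 1)
  have le2 : dst τ hp i ≤ dst τ hp (i + 1) + 1 := Nat.find_min' _ h3
  omega

noncomputable def locF (s : Fin n → Bool) (j : Fin n) : ℕ :=
  (if s j then 1 else 0) +
    2 * (if s (j - 1) = true ∧ s j = false then 1 + dst τ hp j else 0)

noncomputable def Phi (s : Fin n → Bool) : ℕ := ∑ j, locF τ hp s j

lemma Phi_le (s : Fin n → Bool) : Phi τ hp s ≤ 5 * n ^ 2 := by
  have h1 : Phi τ hp s ≤ n * (2 * n + 3) := by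
    have : ∀ j ∈ Finset.univ, locF τ hp s j ≤ 2 * n + 3 := by
      intro j _
      have hd := dst_le τ hp j
      unfold locF
      split <;> split <;> omega
    calc Phi τ hp s ≤ Finset.univ.card • (2 * n + 3) :=
          Finset.sum_le_card_nsmul _ _ _ this
      _ = n * (2 * n + 3) := by simp [Finset.card_univ, mul_comm]
  have hn : 1 ≤ n := Nat.pos_of_ne_zero (NeZero.ne n)
  nlinarith

private lemma local_ineq (ti a b c : Bool) (di dj : ℕ)
    (h0 : ti = true → di = 0) (h1 : ti = false → di = dj + 1)
    (hne : b ≠ (if ti then a && c else a)) :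
    ((if (!b) then 1 else 0) + 2 * (if a = true ∧ (!b) = false then 1 + di else 0)) +
      ((if c then 1 else 0) + 2 * (if (!b) = true ∧ c = false then 1 + dj else 0)) <
    ((if b then 1 else 0) + 2 * (if a = true ∧ b = false then 1 + di else 0)) +
      ((if c then 1 else 0) + 2 * (if b = true ∧ c = false then 1 + dj else 0)) := by
  cases ti <;> cases a <;> cases b <;> cases c <;> simp_all <;> omega


lemma add_one_ne (hn : 2 ≤ n) (i : Fin n) : i + 1 ≠ i := by
  intro h
  have h1 : (i + 1) - i = i - i := by rw [h]
  rw [add_sub_cancel_left, sub_self] at h1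
  have h2 := congrArg Fin.val h1
  rw [Fin.val_one'] at h2
  simp [Nat.mod_eq_of_lt (show 1 < n from hn)] at h2

lemma sub_one_ne (hn : 2 ≤ n) (i : Fin n) : i - 1 ≠ i := by
  intro h
  have h1 : (i - 1) + 1 = i + 1 := by rw [h]
  rw [sub_add_cancel] at h1
  exact add_one_ne hn (i - 1) (by rw [sub_add_cancel]; exact h.symm)

lemma Phi_decrease (hn : 2 ≤ n) {s : Fin n → Bool} {i : Fin n}
    (h : s i ≠ atgt τ s i) :
    Phi τ hp (Function.update s i (!(s i))) < Phi τ hp s := by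
  set s' := Function.update s i (!(s i)) with hs'def
  have hne1 : i + 1 ≠ i := add_one_ne hn i
  have hne2 : i - 1 ≠ i := sub_one_ne hn i
  have hsub : (i + 1) - 1 = i := add_sub_cancel_right i 1
  have hs'i : s' i = !(s i) := Function.update_self i _ s
  have hs'm : s' (i - 1) = s (i - 1) := Function.update_of_ne hne2 _ s
  have hs'p : s' (i + 1) = s (i + 1) := Function.update_of_ne hne1 _ s
  have hmem : (i + 1) ∈ Finset.univ.erase i := by
    exact Finset.mem_erase.2 ⟨hne1, Finset.mem_univ _⟩
  have key : ∀ t : Fin n → Bool,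
      Phi τ hp t = (∑ j ∈ (Finset.univ.erase i).erase (i + 1), locF τ hp t j)
        + locF τ hp t (i + 1) + locF τ hp t i := by
    intro t
    rw [Phi, ← Finset.sum_erase_add Finset.univ _ (Finset.mem_univ i),
      ← Finset.sum_erase_add (Finset.univ.erase i) _ hmem]
  have hcommon : ∑ j ∈ (Finset.univ.erase i).erase (i + 1), locF τ hp s' j
      = ∑ j ∈ (Finset.univ.erase i).erase (i + 1), locF τ hp s j := by
    refine Finset.sum_congr rfl ?_
    intro j hj
    have h1 := Finset.mem_erase.1 hj
    have hjne1 : j ≠ i + 1 := h1.1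
    have hjne : j ≠ i := (Finset.mem_erase.1 h1.2).1
    have hjm : j - 1 ≠ i := by
      intro hc
      apply hjne1
      rw [← hc, sub_add_cancel]
    have hv1 : s' j = s j := Function.update_of_ne hjne _ s
    have hv2 : s' (j - 1) = s (j - 1) := Function.update_of_ne hjm _ s
    unfold locF
    rw [hv1, hv2]
  have hlocal : locF τ hp s' (i + 1) + locF τ hp s' i
      < locF τ hp s (i + 1) + locF τ hp s i := by
    have h0 : τ i = true → dst τ hp i = 0 := fun hh => dst_zero τ hp hh
    have h1 : τ i = false → dst τ hp i = dst τ hp (i + 1) + 1 := fun hh => dst_succ τ hp hh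
    have hne : s i ≠ (if τ i then s (i - 1) && s (i + 1) else s (i - 1)) := h
    have e1 : locF τ hp s' i
        = (if (!(s i)) then 1 else 0) +
          2 * (if s (i - 1) = true ∧ (!(s i)) = false then 1 + dst τ hp i else 0) := by
      unfold locF; rw [hs'i, hs'm]
    have e2 : locF τ hp s' (i + 1)
        = (if s (i + 1) then 1 else 0) +
          2 * (if (!(s i)) = true ∧ s (i + 1) = false then 1 + dst τ hp (i + 1) else 0) := by
      unfold locF; rw [hsub, hs'i, hs'p]
    have e3 : locF τ hp s i
        = (if s i then 1 else 0) +
          2 * (if s (i - 1) = true ∧ s i = false then 1 + dst τ hp i else 0) := rfl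
    have e4 : locF τ hp s (i + 1)
        = (if s (i + 1) then 1 else 0) +
          2 * (if s i = true ∧ s (i + 1) = false then 1 + dst τ hp (i + 1) else 0) := by
      unfold locF; rw [hsub]
    rw [e1, e2, e3, e4]
    have := local_ineq (τ i) (s (i - 1)) (s i) (s (i + 1)) (dst τ hp i) (dst τ hp (i + 1))
      h0 h1 hne
    omega
  have k1 := key s'
  have k2 := key s
  rw [hcommon] at k1
  omega

end CGAux

namespace CGAux2

open CircleGame

open Fin.NatCast Fin.CommRing

variable {n : ℕ} [NeZero n] {G : CircleGame n}

lemma notBR2 {i : Fin n} (h : G.IsType2 i) (s : Fin n → Bool) :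
    ¬ G.CurrentBR s i ↔ s i ≠ (s (i - 1) && s (i + 1)) := by
  obtain ⟨h1, h2, h3⟩ := h
  have hsub : (i + 1) - 1 = i := add_sub_cancel_right i 1
  unfold CircleGame.CurrentBR CircleGame.cong
  rw [hsub]
  cases ha : s (i - 1) <;> cases hb : s i <;> cases hc : s (i + 1) <;>
    simp [ha, hb, hc] <;> omega

lemma notBR3 {i : Fin n} (h : G.IsType3 i) (s : Fin n → Bool) :
    ¬ G.CurrentBR s i ↔ s i ≠ s (i - 1) := by
  obtain ⟨h1, h2, h3⟩ := h
  have hsub : (i + 1) - 1 = i := add_sub_cancel_right i 1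
  unfold CircleGame.CurrentBR CircleGame.cong
  rw [hsub]
  cases ha : s (i - 1) <;> cases hb : s i <;> cases hc : s (i + 1) <;>
    simp [ha, hb, hc] <;> omega

lemma notBR2' {i : Fin n} (h : G.IsType2' i) (s : Fin n → Bool) :
    ¬ G.CurrentBR s i ↔ s i ≠ (s (i - 1) || s (i + 1)) := by
  obtain ⟨h1, h2, h3⟩ := h
  have hsub : (i + 1) - 1 = i := add_sub_cancel_right i 1
  unfold CircleGame.CurrentBR CircleGame.cong
  rw [hsub]
  cases ha : s (i - 1) <;> cases hb : s i <;> cases hc : s (i + 1) <;>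
    simp [ha, hb, hc] <;> omega

lemma notBR3' {i : Fin n} (h : G.IsType3' i) (s : Fin n → Bool) :
    ¬ G.CurrentBR s i ↔ s i ≠ s (i + 1) := by
  obtain ⟨h1, h2, h3⟩ := h
  have hsub : (i + 1) - 1 = i := add_sub_cancel_right i 1
  unfold CircleGame.CurrentBR CircleGame.cong
  rw [hsub]
  cases ha : s (i - 1) <;> cases hb : s i <;> cases hc : s (i + 1) <;>
    simp [ha, hb, hc] <;> omega

lemma all_typed (hn : 2 ≤ n) (G : CircleGame n)
    (h : ∀ i, ¬G.IsType1 i ∧ ¬G.IsType1' i) (i : Fin n) :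
    G.IsType2 i ∨ G.IsType3 i ∨ G.IsType2' i ∨ G.IsType3' i := by
  obtain ⟨k1, k1'⟩ := h i
  have m0 : G.d0 i 1 < G.d0 i 2 := G.mono0 i one_lt_two
  have m1 : G.d1 i 1 < G.d1 i 2 := G.mono1 i one_lt_two
  have t11 := G.tie i 1 le_rfl (by omega) 1 le_rfl (by omega)
  have t12 := G.tie i 1 le_rfl (by omega) 2 (by omega) hn
  have t21 := G.tie i 2 (by omega) hn 1 (by omega) (by omega)
  have t22 := G.tie i 2 (by omega) hn 2 (by omega) hn
  unfold CircleGame.IsType1 at k1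
  unfold CircleGame.IsType1' at k1'
  unfold CircleGame.IsType2 CircleGame.IsType3 CircleGame.IsType2' CircleGame.IsType3'
  omega

lemma circle_reach {P : Fin n → Prop} (h : ∀ i, P (i - 1) → P i) {j : Fin n}
    (hj : P j) (i : Fin n) : P i := by
  have key : ∀ k : ℕ, P (j + (k : Fin n)) := by
    intro k
    induction k with
    | zero => simpa using hj
    | succ m ih =>
        have e : (j + ((m + 1 : ℕ) : Fin n)) - 1 = j + ((m : ℕ) : Fin n) := by
          push_cast; ring
        exact h _ (by rw [e]; exact ih)
  have e2 : i = j + (((i - j : Fin n) : ℕ) : Fin n) := by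
    rw [Fin.cast_val_eq_self]; ring
  rw [e2]; exact key _

lemma circle_reach' {P : Fin n → Prop} (h : ∀ i, P (i + 1) → P i) {j : Fin n}
    (hj : P j) (i : Fin n) : P i := by
  have := circle_reach (P := fun k => P (-k))
    (fun k hk => h (-k) (by rw [show -k + 1 = -(k - 1) by ring]; exact hk))
    (j := -j) (by simpa using hj) (-i)
  simpa using this

lemma update_comp_neg (s : Fin n → Bool) (i : Fin n) (v : Bool) :
    (fun j => Function.update s i v (-j)) = Function.update (fun j => s (-j)) (-i) v := by
  funext j
  rw [Function.update_apply, Function.update_apply]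
  by_cases hji : j = -i
  · rw [if_pos hji, if_pos (by rw [hji, neg_neg])]
  · rw [if_neg hji, if_neg (fun hc => hji (by rw [← hc, neg_neg]))]

lemma update_comp_not (s : Fin n → Bool) (i : Fin n) (v : Bool) :
    (fun j => !(Function.update s i v j)) = Function.update (fun j => !(s j)) i (!v) := by
  funext j
  rw [Function.update_apply, Function.update_apply]
  by_cases hji : j = i
  · rw [if_pos hji, if_pos hji]
  · rw [if_neg hji, if_neg hji]

end CGAux2

/-- There is a constant `C > 0` such that for every circle game with `n`
players in which no player is of type 1 or 1' and which has termination points for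
exactly one kind of token, the transition graph is acyclic and every best response
schedule terminates after at most `C·n^2` steps. -/

theorem circle_one_kind_of_termination_points :
    ∃ C : ℕ, 0 < C ∧
      ∀ (n : ℕ) [NeZero n] (G : CircleGame n),
        (∀ i, ¬ G.IsType1 i ∧ ¬ G.IsType1' i) →
        (((∃ i, G.OverloadTP i) ∧ (∀ i, ¬ G.UnderloadTP i)) ∨
          ((∃ i, G.UnderloadTP i) ∧ (∀ i, ¬ G.OverloadTP i))) →
        (∀ s : Fin n → Bool, ¬ Relation.TransGen G.Step s s) ∧
        (∀ (L : ℕ) (f : ℕ → Fin n → Bool),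
          (∀ k, k < L → G.Step (f k) (f (k + 1))) → L ≤ C * n ^ 2) := by
  classical
  refine ⟨5, by norm_num, ?_⟩
  intro n _ G htypes hterm
  rcases Nat.lt_or_ge n 2 with hn | hn
  · -- n = 1 : the hypotheses are contradictory
    exfalso
    have hn1 : n = 1 := by have := Nat.pos_of_ne_zero (NeZero.ne n); omega
    subst hn1
    have hsub : ∀ i : Fin 1, i - 1 = i := fun i => Subsingleton.elim _ _
    rcases hterm with ⟨⟨i, hi⟩, -⟩ | ⟨⟨i, hi⟩, -⟩
    · unfold CircleGame.OverloadTP at hi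
      rw [hsub i] at hi
      unfold CircleGame.IsType2 CircleGame.IsType3 at hi
      unfold CircleGame.IsType2' CircleGame.IsType3' at hi
      omega
    · unfold CircleGame.UnderloadTP at hi
      rw [hsub i] at hi
      unfold CircleGame.IsType2 CircleGame.IsType3 at hi
      unfold CircleGame.IsType2' CircleGame.IsType3' at hi
      omega
  have hall4 := CGAux2.all_typed hn G htypes
  have main : ∃ (τ : Fin n → Bool) (F : (Fin n → Bool) → (Fin n → Bool)) (p : Fin n),
      τ p = true ∧ ∀ s s', G.Step s s' → CGAux.AStep τ (F s) (F s') := by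
    rcases hterm with ⟨⟨i₀, hi₀⟩, hno⟩ | ⟨⟨i₀, hi₀⟩, hno⟩
    · -- overload TPs exist, no underload TPs
      have hprop : ∀ i, (G.IsType2 (i - 1) ∨ G.IsType3 (i - 1)) →
          (G.IsType2 i ∨ G.IsType3 i) := by
        intro i hPi
        rcases hall4 i with h | h | h | h
        · exact Or.inl h
        · exact Or.inr h
        · exfalso
          rcases hPi with h' | h'
          · exact hno i (Or.inl ⟨h', h⟩)
          · exact hno i (Or.inr (Or.inr (Or.inr ⟨h', h⟩)))
        · exfalso
          rcases hPi with h' | h'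
          · exact hno i (Or.inr (Or.inr (Or.inl ⟨h', h⟩)))
          · exact hno i (Or.inr (Or.inl ⟨h', h⟩))
      by_cases hAll : ∀ i, G.IsType2 i ∨ G.IsType3 i
      · -- case A1: all players of type 2 or 3, some type 2
        have hp2 : G.IsType2 i₀ := by
          rcases hi₀ with ⟨-, h⟩ | ⟨-, h⟩ | ⟨-, h⟩ | ⟨-, h⟩
          · exact h
          · exfalso
            rcases hAll i₀ with h2 | h2 <;>
              (obtain ⟨a1, a2, a3⟩ := h; obtain ⟨b1, b2, b3⟩ := h2; omega)
          · exact h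
          · exfalso
            rcases hAll i₀ with h2 | h2 <;>
              (obtain ⟨a1, a2, a3⟩ := h; obtain ⟨b1, b2, b3⟩ := h2; omega)
        refine ⟨fun i => if G.IsType2 i then true else false, id, i₀, by simp [hp2], ?_⟩
        rintro s s' ⟨i, hbr, hupd⟩
        refine ⟨i, ?_, hupd⟩
        by_cases h2 : G.IsType2 i
        · have hx := (CGAux2.notBR2 h2 s).mp hbr
          simpa [CGAux.atgt, h2] using hx
        · have h3 : G.IsType3 i := (hAll i).resolve_left h2
          have hx := (CGAux2.notBR3 h3 s).mp hbr
          simpa [CGAux.atgt, h2] using hx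
      · -- case A2: all players of type 2' or 3', some 2'
        have hnP : ∀ i, ¬(G.IsType2 i ∨ G.IsType3 i) := by
          push_neg at hAll
          obtain ⟨j, hj⟩ := hAll
          have hj' : ¬(G.IsType2 j ∨ G.IsType3 j) := by tauto
          exact CGAux2.circle_reach' (P := fun i => ¬(G.IsType2 i ∨ G.IsType3 i))
            (fun i hni hPi => hni (hprop (i + 1)
              (by rw [add_sub_cancel_right]; exact hPi))) hj'
        have hQ : ∀ i, G.IsType2' i ∨ G.IsType3' i := by
          intro i
          rcases hall4 i with h | h | h | h
          · exact absurd (Or.inl h) (hnP i)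
          · exact absurd (Or.inr h) (hnP i)
          · exact Or.inl h
          · exact Or.inr h
        have hp2' : G.IsType2' (i₀ - 1) := by
          rcases hi₀ with ⟨h, -⟩ | ⟨h, -⟩ | ⟨h, -⟩ | ⟨h, -⟩
          · exact h
          · exact absurd (Or.inr h) (hnP _)
          · exact absurd (Or.inr h) (hnP _)
          · exact h
        refine ⟨fun j => if G.IsType2' (-j) then true else false,
          fun s => fun j => !(s (-j)), -(i₀ - 1), by simp [hp2'], ?_⟩
        rintro s s' ⟨i, hbr, hupd⟩
        refine ⟨-i, ?_, ?_⟩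
        · have e1 : -(-i) = i := neg_neg i
          have e2 : -(-i - 1) = i + 1 := by open Fin.CommRing in ring
          have e3 : -(-i + 1) = i - 1 := by open Fin.CommRing in ring
          by_cases h2 : G.IsType2' i
          · have hx := (CGAux2.notBR2' h2 s).mp hbr
            simp only [CGAux.atgt, e1, e2, e3, h2, if_true, if_pos]
            revert hx
            cases hA : s (i - 1) <;> cases hB : s i <;> cases hC : s (i + 1) <;> simp_all
          · have h3 : G.IsType3' i := (hQ i).resolve_left h2
            have hx := (CGAux2.notBR3' h3 s).mp hbr
            simp only [CGAux.atgt, e1, e2, e3, h2]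
            revert hx
            cases hB : s i <;> cases hC : s (i + 1) <;> simp_all
        · rw [hupd]
          funext j
          simp only [Function.update_apply, neg_neg]
          by_cases hji : j = -i
          · have hji2 : -j = i := by rw [hji, neg_neg]
            simp [hji, hji2]
          · have hji2 : ¬(-j = i) := fun hc => hji (by rw [← hc, neg_neg])
            simp [hji, hji2]
    · -- underload TPs exist, no overload TPs
      have hprop : ∀ i, (G.IsType2' (i - 1) ∨ G.IsType3 (i - 1)) →
          (G.IsType2' i ∨ G.IsType3 i) := by
        intro i hPi
        rcases hall4 i with h | h | h | h
        · exfalso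
          rcases hPi with h' | h'
          · exact hno i (Or.inl ⟨h', h⟩)
          · exact hno i (Or.inr (Or.inr (Or.inl ⟨h', h⟩)))
        · exact Or.inr h
        · exact Or.inl h
        · exfalso
          rcases hPi with h' | h'
          · exact hno i (Or.inr (Or.inr (Or.inr ⟨h', h⟩)))
          · exact hno i (Or.inr (Or.inl ⟨h', h⟩))
      by_cases hAll : ∀ i, G.IsType2' i ∨ G.IsType3 i
      · -- case B1: all players of type 2' or 3, some 2'
        have hp2' : G.IsType2' i₀ := by
          rcases hi₀ with ⟨-, h⟩ | ⟨-, h⟩ | ⟨-, h⟩ | ⟨-, h⟩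
          · exact h
          · exfalso
            rcases hAll i₀ with h2 | h2 <;>
              (obtain ⟨a1, a2, a3⟩ := h; obtain ⟨b1, b2, b3⟩ := h2; omega)
          · exfalso
            rcases hAll i₀ with h2 | h2 <;>
              (obtain ⟨a1, a2, a3⟩ := h; obtain ⟨b1, b2, b3⟩ := h2; omega)
          · exact h
        refine ⟨fun i => if G.IsType2' i then true else false,
          fun s => fun j => !(s j), i₀, by simp [hp2'], ?_⟩
        rintro s s' ⟨i, hbr, hupd⟩
        refine ⟨i, ?_, ?_⟩
        · by_cases h2 : G.IsType2' i
          · have hx := (CGAux2.notBR2' h2 s).mp hbr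
            simp only [CGAux.atgt, h2]
            revert hx
            cases hA : s (i - 1) <;> cases hB : s i <;> cases hC : s (i + 1) <;> simp_all
          · have h3 : G.IsType3 i := (hAll i).resolve_left h2
            have hx := (CGAux2.notBR3 h3 s).mp hbr
            simp only [CGAux.atgt, h2]
            revert hx
            cases hA : s (i - 1) <;> cases hB : s i <;> simp_all
        · rw [hupd]
          exact CGAux2.update_comp_not s i (!(s i))
      · -- case B2: all players of type 2 or 3', some 2
        have hnP : ∀ i, ¬(G.IsType2' i ∨ G.IsType3 i) := by
          push_neg at hAll
          obtain ⟨j, hj⟩ := hAll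
          have hj' : ¬(G.IsType2' j ∨ G.IsType3 j) := by tauto
          exact CGAux2.circle_reach' (P := fun i => ¬(G.IsType2' i ∨ G.IsType3 i))
            (fun i hni hPi => hni (hprop (i + 1)
              (by rw [add_sub_cancel_right]; exact hPi))) hj'
        have hQ : ∀ i, G.IsType2 i ∨ G.IsType3' i := by
          intro i
          rcases hall4 i with h | h | h | h
          · exact Or.inl h
          · exact absurd (Or.inr h) (hnP i)
          · exact absurd (Or.inl h) (hnP i)
          · exact Or.inr h
        have hp2 : G.IsType2 (i₀ - 1) := by
          rcases hi₀ with ⟨h, -⟩ | ⟨h, -⟩ | ⟨h, -⟩ | ⟨h, -⟩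
          · exact h
          · exact absurd (Or.inr h) (hnP _)
          · exact h
          · exact absurd (Or.inr h) (hnP _)
        refine ⟨fun j => if G.IsType2 (-j) then true else false,
          fun s => fun j => s (-j), -(i₀ - 1), by simp [hp2], ?_⟩
        rintro s s' ⟨i, hbr, hupd⟩
        refine ⟨-i, ?_, ?_⟩
        · have e1 : -(-i) = i := neg_neg i
          have e2 : -(-i - 1) = i + 1 := by open Fin.CommRing in ring
          have e3 : -(-i + 1) = i - 1 := by open Fin.CommRing in ring
          by_cases h2 : G.IsType2 i
          · have hx := (CGAux2.notBR2 h2 s).mp hbr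
            simp only [CGAux.atgt, e1, e2, e3, h2]
            revert hx
            cases hA : s (i - 1) <;> cases hB : s i <;> cases hC : s (i + 1) <;> simp_all
          · have h3 : G.IsType3' i := (hQ i).resolve_left h2
            have hx := (CGAux2.notBR3' h3 s).mp hbr
            simp only [CGAux.atgt, e1, e2, e3, h2]
            revert hx
            cases hB : s i <;> cases hC : s (i + 1) <;> simp_all
        · rw [hupd]
          funext j
          simp only [Function.update_apply, neg_neg]
          by_cases hji : j = -i
          · have hji2 : -j = i := by rw [hji, neg_neg]
            simp [hji, hji2]
          · have hji2 : ¬(-j = i) := fun hc => hji (by rw [← hc, neg_neg])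
            simp [hji, hji2]
  obtain ⟨τ, F, p, hp, hFstep⟩ := main
  have hpex : ∃ q, τ q = true := ⟨p, hp⟩
  have hdec : ∀ s s', G.Step s s' →
      CGAux.Phi τ hpex (F s') < CGAux.Phi τ hpex (F s) := by
    intro s s' hss
    obtain ⟨i, hne, hupd⟩ := hFstep s s' hss
    rw [hupd]
    exact CGAux.Phi_decrease τ hpex hn hne
  constructor
  · intro s hcyc
    have htg : ∀ a b, Relation.TransGen G.Step a b →
        CGAux.Phi τ hpex (F b) < CGAux.Phi τ hpex (F a) := by
      intro a b hab
      induction hab with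
      | single h => exact hdec _ _ h
      | tail _ h ih => exact lt_trans (hdec _ _ h) ih
    exact lt_irrefl _ (htg s s hcyc)
  · intro L f hf
    have hmono : ∀ k, k ≤ L →
        CGAux.Phi τ hpex (F (f k)) + k ≤ CGAux.Phi τ hpex (F (f 0)) := by
      intro k
      induction k with
      | zero => intro _; omega
      | succ m ih =>
          intro hk
          have h1 := hdec _ _ (hf m (by omega))
          have h2 := ih (by omega)
          omega
    have hb := CGAux.Phi_le τ hpex (F (f 0))
    have hL := hmono L le_rfl
    omega
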